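/- Let A be a unital ring and let 0 → X → Y → Z → 0 be a short exact sequence of A-modules, i.e. there are A-linear maps f : X → Y injective and g : Y → Z surjective with range f = ker g. If Y and Z are both stably free (and finitely generated), then X is stably free. -/

import Mathlib

/-- An `A`-module `M` is *stably free* if `M ⊕ A^s ≅ A^t` for some natural numbers `s, t`. -/
def IsStablyFree (A : Type*) [Ring A] (M : Type*) [AddCommGroup M] [Module A M] : Prop :=
  ∃ s t : ℕ, Nonempty ((M × (Fin s → A)) ≃ₗ[A] (Fin t → A))

/-- `A^(a+b) ≃ A^a × A^b`. -/
noncomputable def finAddPowEquiv (A : Type*) [Ring A] (a b : ℕ) :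
    (Fin (a + b) → A) ≃ₗ[A] (Fin a → A) × (Fin b → A) :=
  (LinearEquiv.funCongrLeft A A finSumFinEquiv).trans
    (LinearEquiv.sumArrowLequivProdArrow _ _ A A)

/-- If `0 → X → Y → Z → 0` is a short exact sequence of `A`-modules and both `Y` and `Z` are
stably free, then so is `X`. -/
theorem isStablyFree_of_shortExact {A X Y Z : Type*} [Ring A]
    [AddCommGroup X] [Module A X] [AddCommGroup Y] [Module A Y] [AddCommGroup Z] [Module A Z]
    (f : X →ₗ[A] Y) (g : Y →ₗ[A] Z)
    (hf : Function.Injective f) (hg : Function.Surjective g)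
    (hfg : LinearMap.range f = LinearMap.ker g)
    (hY : IsStablyFree A Y) (hZ : IsStablyFree A Z) :
    IsStablyFree A X := by
  obtain ⟨s, t, ⟨eZ⟩⟩ := hZ
  obtain ⟨u, v, ⟨eY⟩⟩ := hY
  -- stabilized sequence 0 → X → Y × A^s → Z × A^s → 0
  set f' : X →ₗ[A] Y × (Fin s → A) := (LinearMap.inl A Y (Fin s → A)).comp f with hf'def
  set g' : Y × (Fin s → A) →ₗ[A] Z × (Fin s → A) := g.prodMap LinearMap.id with hg'def
  have hf' : Function.Injective f' := fun a b h => hf (congrArg Prod.fst h)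
  have hg' : Function.Surjective g' := fun p => by
    obtain ⟨y, hy⟩ := hg p.1
    exact ⟨(y, p.2), by simp [hg'def, hy]⟩
  have hex : Function.Exact f' g' := by
    intro y
    constructor
    · rintro hy
      have h1 : g y.1 = 0 := congrArg Prod.fst hy
      have h2 : y.2 = 0 := congrArg Prod.snd hy
      have : y.1 ∈ LinearMap.range f := hfg ▸ h1
      obtain ⟨x, hx⟩ := this
      exact ⟨x, by simp [hf'def, hx, ← h2]⟩
    · rintro ⟨x, rfl⟩
      have : g (f x) = 0 := by
        have : f x ∈ LinearMap.ker g := hfg ▸ LinearMap.mem_range_self f x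
        exact this
      simp [hf'def, hg'def, this]
  -- Z × A^s is projective since it is isomorphic to A^t
  have : Module.Projective A (Z × (Fin s → A)) := Module.Projective.of_equiv eZ.symm
  obtain ⟨l, hl⟩ := Module.projective_lifting_property g' LinearMap.id hg'
  obtain ⟨e, -, -⟩ := hex.splitSurjectiveEquiv hf' ⟨l, hl⟩
  -- e : Y × A^s ≃ₗ X × (Z × A^s)
  refine ⟨t + u, v + s, ⟨?_⟩⟩
  exact (LinearEquiv.prodCongr (LinearEquiv.refl A X) (finAddPowEquiv A t u)).trans <|
    (LinearEquiv.prodAssoc A X (Fin t → A) (Fin u → A)).symm.trans <|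
    (LinearEquiv.prodCongr (LinearEquiv.prodCongr (LinearEquiv.refl A X) eZ.symm)
      (LinearEquiv.refl A (Fin u → A))).trans <|
    (LinearEquiv.prodCongr e.symm (LinearEquiv.refl A (Fin u → A))).trans <|
    (LinearEquiv.prodAssoc A Y (Fin s → A) (Fin u → A)).trans <|
    (LinearEquiv.prodCongr (LinearEquiv.refl A Y)
      (LinearEquiv.prodComm A (Fin s → A) (Fin u → A))).trans <|
    (LinearEquiv.prodAssoc A Y (Fin u → A) (Fin s → A)).symm.trans <|
    (LinearEquiv.prodCongr eY (LinearEquiv.refl A (Fin s → A))).trans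
    (finAddPowEquiv A v s).symm
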